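/- Let u : ℝ³ → ℝ be twice continuously differentiable in (x,y,t) satisfying u_{yy} + u_{xt} + u_y u_{tt} − u_t u_{yt} = 0 at every point. Then the following four conservation laws hold at every point: (1) ∂_y(u_y − u_t²) + ∂_t(u_x + u_y u_t) = 0; (2) ∂_x(u_t²/2) + ∂_y(u_y u_t − u_t³/2) + ∂_t(−u_y u_t² − u_y²/2 + (3/2) u_t² u_y) = 0; (3) ∂_x(u_y u_t − u_t³) + ∂_y(−u_x u_t + u_y² − 3 u_y u_t² + u_t⁴) + ∂_t(u_x u_y + 2 u_t u_y² − u_y u_t³) = 0; (4) ∂_x(u_y² − 2 u_y u_t² + u_t⁴) + ∂_y(−2 u_x u_y + 2 u_x u_t² − 3 u_y² u_t + 4 u_y u_t³ − u_t⁵) + ∂_t(−2 u_x u_y u_t − u_x² − 3 u_y² u_t² + u_y u_t⁴ + u_y³) = 0. -/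

import Mathlib

/-- Partial derivative with respect to the first variable `x`. -/
noncomputable def pdx (f : ℝ × ℝ × ℝ → ℝ) (p : ℝ × ℝ × ℝ) : ℝ :=
  deriv (fun s => f (s, p.2.1, p.2.2)) p.1

/-- Partial derivative with respect to the second variable `y`. -/
noncomputable def pdy (f : ℝ × ℝ × ℝ → ℝ) (p : ℝ × ℝ × ℝ) : ℝ :=
  deriv (fun s => f (p.1, s, p.2.2)) p.2.1

/-- Partial derivative with respect to the third variable `t`. -/
noncomputable def pdt (f : ℝ × ℝ × ℝ → ℝ) (p : ℝ × ℝ × ℝ) : ℝ :=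
  deriv (fun s => f (p.1, p.2.1, s)) p.2.2

private lemma curveX (p : ℝ × ℝ × ℝ) :
    HasDerivAt (fun s : ℝ => ((s, p.2.1, p.2.2) : ℝ × ℝ × ℝ)) (1, 0, 0) p.1 :=
  HasDerivAt.prodMk (hasDerivAt_id p.1) (HasDerivAt.prodMk (hasDerivAt_const _ _) (hasDerivAt_const _ _))

private lemma curveY (p : ℝ × ℝ × ℝ) :
    HasDerivAt (fun s : ℝ => ((p.1, s, p.2.2) : ℝ × ℝ × ℝ)) (0, 1, 0) p.2.1 :=
  HasDerivAt.prodMk (hasDerivAt_const _ _) (HasDerivAt.prodMk (hasDerivAt_id _) (hasDerivAt_const _ _))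

private lemma curveT (p : ℝ × ℝ × ℝ) :
    HasDerivAt (fun s : ℝ => ((p.1, p.2.1, s) : ℝ × ℝ × ℝ)) (0, 0, 1) p.2.2 :=
  HasDerivAt.prodMk (hasDerivAt_const _ _) (HasDerivAt.prodMk (hasDerivAt_const _ _) (hasDerivAt_id _))

private lemma pdx_eq (f : ℝ × ℝ × ℝ → ℝ) (p : ℝ × ℝ × ℝ) (hf : DifferentiableAt ℝ f p) :
    pdx f p = fderiv ℝ f p (1, 0, 0) :=
  (hf.hasFDerivAt.comp_hasDerivAt p.1 (curveX p)).deriv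

private lemma pdy_eq (f : ℝ × ℝ × ℝ → ℝ) (p : ℝ × ℝ × ℝ) (hf : DifferentiableAt ℝ f p) :
    pdy f p = fderiv ℝ f p (0, 1, 0) :=
  (hf.hasFDerivAt.comp_hasDerivAt p.2.1 (curveY p)).deriv

private lemma pdt_eq (f : ℝ × ℝ × ℝ → ℝ) (p : ℝ × ℝ × ℝ) (hf : DifferentiableAt ℝ f p) :
    pdt f p = fderiv ℝ f p (0, 0, 1) :=
  (hf.hasFDerivAt.comp_hasDerivAt p.2.2 (curveT p)).deriv

private lemma sliceFDeriv (u : ℝ × ℝ × ℝ → ℝ) (hu : ContDiff ℝ 2 u) (w : ℝ × ℝ × ℝ)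
    (p : ℝ × ℝ × ℝ) :
    HasFDerivAt (fun q => fderiv ℝ u q w)
      ((ContinuousLinearMap.apply ℝ ℝ w).comp (fderiv ℝ (fderiv ℝ u) p)) p := by
  have h1 : HasFDerivAt (fderiv ℝ u) (fderiv ℝ (fderiv ℝ u) p) p :=
    (((hu.fderiv_right (m := 1) (by norm_num)).differentiable one_ne_zero) p).hasFDerivAt
  exact ((ContinuousLinearMap.apply ℝ ℝ w).hasFDerivAt).comp p h1

private lemma sliceX (u : ℝ × ℝ × ℝ → ℝ) (hu : ContDiff ℝ 2 u) (w : ℝ × ℝ × ℝ)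
    (p : ℝ × ℝ × ℝ) :
    HasDerivAt (fun s : ℝ => fderiv ℝ u (s, p.2.1, p.2.2) w)
      (fderiv ℝ (fderiv ℝ u) p (1, 0, 0) w) p.1 := by
  have := (sliceFDeriv u hu w p).comp_hasDerivAt p.1 (curveX p)
  exact this

private lemma sliceY (u : ℝ × ℝ × ℝ → ℝ) (hu : ContDiff ℝ 2 u) (w : ℝ × ℝ × ℝ)
    (p : ℝ × ℝ × ℝ) :
    HasDerivAt (fun s : ℝ => fderiv ℝ u (p.1, s, p.2.2) w)
      (fderiv ℝ (fderiv ℝ u) p (0, 1, 0) w) p.2.1 := by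
  have := (sliceFDeriv u hu w p).comp_hasDerivAt p.2.1 (curveY p)
  exact this

private lemma sliceT (u : ℝ × ℝ × ℝ → ℝ) (hu : ContDiff ℝ 2 u) (w : ℝ × ℝ × ℝ)
    (p : ℝ × ℝ × ℝ) :
    HasDerivAt (fun s : ℝ => fderiv ℝ u (p.1, p.2.1, s) w)
      (fderiv ℝ (fderiv ℝ u) p (0, 0, 1) w) p.2.2 := by
  have := (sliceFDeriv u hu w p).comp_hasDerivAt p.2.2 (curveT p)
  exact this

/-- The four first-order conservation laws of the equation
`u_{yy} + u_{xt} + u_y u_{tt} - u_t u_{yt} = 0`. -/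
theorem equation4_conservation_laws
    (u : ℝ × ℝ × ℝ → ℝ) (hu : ContDiff ℝ 2 u)
    (heq : ∀ p : ℝ × ℝ × ℝ,
      pdy (pdy u) p + pdt (pdx u) p + pdy u p * pdt (pdt u) p
        - pdt u p * pdt (pdy u) p = 0) :
    (∀ p : ℝ × ℝ × ℝ,
      pdy (fun q => pdy u q - (pdt u q) ^ 2) p
        + pdt (fun q => pdx u q + pdy u q * pdt u q) p = 0) ∧
    (∀ p : ℝ × ℝ × ℝ,
      pdx (fun q => (pdt u q) ^ 2 / 2) p
        + pdy (fun q => pdy u q * pdt u q - (pdt u q) ^ 3 / 2) p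
        + pdt (fun q => -(pdy u q * (pdt u q) ^ 2) - (pdy u q) ^ 2 / 2
            + 3 / 2 * (pdt u q) ^ 2 * pdy u q) p = 0) ∧
    (∀ p : ℝ × ℝ × ℝ,
      pdx (fun q => pdy u q * pdt u q - (pdt u q) ^ 3) p
        + pdy (fun q => -(pdx u q * pdt u q) + (pdy u q) ^ 2
            - 3 * pdy u q * (pdt u q) ^ 2 + (pdt u q) ^ 4) p
        + pdt (fun q => pdx u q * pdy u q + 2 * pdt u q * (pdy u q) ^ 2
            - pdy u q * (pdt u q) ^ 3) p = 0) ∧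
    (∀ p : ℝ × ℝ × ℝ,
      pdx (fun q => (pdy u q) ^ 2 - 2 * pdy u q * (pdt u q) ^ 2 + (pdt u q) ^ 4) p
        + pdy (fun q => -(2 * pdx u q * pdy u q) + 2 * pdx u q * (pdt u q) ^ 2
            - 3 * (pdy u q) ^ 2 * pdt u q + 4 * pdy u q * (pdt u q) ^ 3 - (pdt u q) ^ 5) p
        + pdt (fun q => -(2 * pdx u q * pdy u q * pdt u q) - (pdx u q) ^ 2
            - 3 * (pdy u q) ^ 2 * (pdt u q) ^ 2 + pdy u q * (pdt u q) ^ 4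
            + (pdy u q) ^ 3) p = 0) := by
  have hdiff : Differentiable ℝ u := hu.differentiable (by norm_num)
  have hXq : ∀ q, pdx u q = fderiv ℝ u q (1, 0, 0) := fun q => pdx_eq u q (hdiff q)
  have hYq : ∀ q, pdy u q = fderiv ℝ u q (0, 1, 0) := fun q => pdy_eq u q (hdiff q)
  have hTq : ∀ q, pdt u q = fderiv ℝ u q (0, 0, 1) := fun q => pdt_eq u q (hdiff q)
  have hsym : ∀ (p v w : ℝ × ℝ × ℝ),
      fderiv ℝ (fderiv ℝ u) p v w = fderiv ℝ (fderiv ℝ u) p w v :=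
    fun p => second_derivative_symmetric (fun q => (hdiff q).hasFDerivAt)
      (((hu.fderiv_right (m := 1) (by norm_num)).differentiable one_ne_zero) p).hasFDerivAt
  have heq' : ∀ p : ℝ × ℝ × ℝ,
      fderiv ℝ (fderiv ℝ u) p (0,1,0) (0,1,0) + fderiv ℝ (fderiv ℝ u) p (0,0,1) (1,0,0)
        + fderiv ℝ u p (0,1,0) * fderiv ℝ (fderiv ℝ u) p (0,0,1) (0,0,1)
        - fderiv ℝ u p (0,0,1) * fderiv ℝ (fderiv ℝ u) p (0,0,1) (0,1,0) = 0 := by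
    intro p
    have h := heq p
    rw [funext hXq, funext hYq, funext hTq] at h
    rwa [show pdy (fun q => fderiv ℝ u q (0,1,0)) p
          = fderiv ℝ (fderiv ℝ u) p (0,1,0) (0,1,0) from (sliceY u hu _ p).deriv,
        show pdt (fun q => fderiv ℝ u q (1,0,0)) p
          = fderiv ℝ (fderiv ℝ u) p (0,0,1) (1,0,0) from (sliceT u hu _ p).deriv,
        show pdt (fun q => fderiv ℝ u q (0,0,1)) p
          = fderiv ℝ (fderiv ℝ u) p (0,0,1) (0,0,1) from (sliceT u hu _ p).deriv,
        show pdt (fun q => fderiv ℝ u q (0,1,0)) p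
          = fderiv ℝ (fderiv ℝ u) p (0,0,1) (0,1,0) from (sliceT u hu _ p).deriv] at h
  refine ⟨?_, ?_, ?_, ?_⟩
  · intro p
    have hY1 := sliceX u hu (0,1,0) p
    have hT1 := sliceX u hu (0,0,1) p
    have hX2 := sliceY u hu (1,0,0) p
    have hY2 := sliceY u hu (0,1,0) p
    have hT2 := sliceY u hu (0,0,1) p
    have hX3 := sliceT u hu (1,0,0) p
    have hY3 := sliceT u hu (0,1,0) p
    have hT3 := sliceT u hu (0,0,1) p
    rw [show (fun q => pdy u q - (pdt u q) ^ 2)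
          = (fun q => fderiv ℝ u q (0,1,0) - fderiv ℝ u q (0,0,1) ^ 2) by
        funext q; simp only [hXq, hYq, hTq],
      show (fun q => pdx u q + pdy u q * pdt u q)
          = (fun q => fderiv ℝ u q (1,0,0) + fderiv ℝ u q (0,1,0) * fderiv ℝ u q (0,0,1)) by
        funext q; simp only [hXq, hYq, hTq]]
    rw [show pdy (fun q => fderiv ℝ u q (0,1,0) - fderiv ℝ u q (0,0,1) ^ 2) p
          = fderiv ℝ (fderiv ℝ u) p (0,1,0) (0,1,0) - 2 * fderiv ℝ u p (0,0,1) * fderiv ℝ (fderiv ℝ u) p (0,1,0) (0,0,1) from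
        (hY2.sub (hT2.pow 2)).deriv.trans (by simp only [Prod.mk.eta]; push_cast; ring),
      show pdt (fun q => fderiv ℝ u q (1,0,0) + fderiv ℝ u q (0,1,0) * fderiv ℝ u q (0,0,1)) p
          = fderiv ℝ (fderiv ℝ u) p (0,0,1) (1,0,0) + fderiv ℝ (fderiv ℝ u) p (0,0,1) (0,1,0) * fderiv ℝ u p (0,0,1) + fderiv ℝ u p (0,1,0) * fderiv ℝ (fderiv ℝ u) p (0,0,1) (0,0,1) from
        (hX3.add (hY3.mul hT3)).deriv.trans (by simp only [Prod.mk.eta]; push_cast; ring)]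
    have h := heq' p
    have s21 := hsym p (0,1,0) (1,0,0)
    have s31 := hsym p (0,0,1) (1,0,0)
    have s32 := hsym p (0,0,1) (0,1,0)
    simp only [s21, s31, s32] at h ⊢
    linear_combination (1) * h
  · intro p
    have hY1 := sliceX u hu (0,1,0) p
    have hT1 := sliceX u hu (0,0,1) p
    have hX2 := sliceY u hu (1,0,0) p
    have hY2 := sliceY u hu (0,1,0) p
    have hT2 := sliceY u hu (0,0,1) p
    have hX3 := sliceT u hu (1,0,0) p
    have hY3 := sliceT u hu (0,1,0) p
    have hT3 := sliceT u hu (0,0,1) p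
    rw [show (fun q => (pdt u q) ^ 2 / 2)
          = (fun q => fderiv ℝ u q (0,0,1) ^ 2 / 2) by
        funext q; simp only [hXq, hYq, hTq],
      show (fun q => pdy u q * pdt u q - (pdt u q) ^ 3 / 2)
          = (fun q => fderiv ℝ u q (0,1,0) * fderiv ℝ u q (0,0,1) - fderiv ℝ u q (0,0,1) ^ 3 / 2) by
        funext q; simp only [hXq, hYq, hTq],
      show (fun q => -(pdy u q * (pdt u q) ^ 2) - (pdy u q) ^ 2 / 2
            + 3 / 2 * (pdt u q) ^ 2 * pdy u q)
          = (fun q => -(fderiv ℝ u q (0,1,0) * fderiv ℝ u q (0,0,1) ^ 2) - fderiv ℝ u q (0,1,0) ^ 2 / 2 + 3 / 2 * fderiv ℝ u q (0,0,1) ^ 2 * fderiv ℝ u q (0,1,0)) by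
        funext q; simp only [hXq, hYq, hTq]]
    rw [show pdx (fun q => fderiv ℝ u q (0,0,1) ^ 2 / 2) p
          = fderiv ℝ u p (0,0,1) * fderiv ℝ (fderiv ℝ u) p (1,0,0) (0,0,1) from
        ((hT1.pow 2).div_const 2).deriv.trans (by simp only [Prod.mk.eta]; push_cast; ring),
      show pdy (fun q => fderiv ℝ u q (0,1,0) * fderiv ℝ u q (0,0,1) - fderiv ℝ u q (0,0,1) ^ 3 / 2) p
          = fderiv ℝ (fderiv ℝ u) p (0,1,0) (0,1,0) * fderiv ℝ u p (0,0,1) + fderiv ℝ u p (0,1,0) * fderiv ℝ (fderiv ℝ u) p (0,1,0) (0,0,1) - 3 / 2 * fderiv ℝ u p (0,0,1) ^ 2 * fderiv ℝ (fderiv ℝ u) p (0,1,0) (0,0,1) from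
        ((hY2.mul hT2).sub ((hT2.pow 3).div_const 2)).deriv.trans (by simp only [Prod.mk.eta]; push_cast; ring),
      show pdt (fun q => -(fderiv ℝ u q (0,1,0) * fderiv ℝ u q (0,0,1) ^ 2) - fderiv ℝ u q (0,1,0) ^ 2 / 2 + 3 / 2 * fderiv ℝ u q (0,0,1) ^ 2 * fderiv ℝ u q (0,1,0)) p
          = 1 / 2 * fderiv ℝ u p (0,0,1) ^ 2 * fderiv ℝ (fderiv ℝ u) p (0,0,1) (0,1,0) + fderiv ℝ u p (0,1,0) * fderiv ℝ u p (0,0,1) * fderiv ℝ (fderiv ℝ u) p (0,0,1) (0,0,1) - fderiv ℝ u p (0,1,0) * fderiv ℝ (fderiv ℝ u) p (0,0,1) (0,1,0) from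
        (((hY3.mul (hT3.pow 2)).neg.sub ((hY3.pow 2).div_const 2)).add (((hT3.pow 2).const_mul (3/2)).mul hY3)).deriv.trans (by simp only [Prod.mk.eta, Pi.pow_apply]; push_cast; ring)]
    have h := heq' p
    have s21 := hsym p (0,1,0) (1,0,0)
    have s31 := hsym p (0,0,1) (1,0,0)
    have s32 := hsym p (0,0,1) (0,1,0)
    simp only [s21, s31, s32] at h ⊢
    linear_combination (fderiv ℝ u p (0,0,1)) * h
  · intro p
    have hY1 := sliceX u hu (0,1,0) p
    have hT1 := sliceX u hu (0,0,1) p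
    have hX2 := sliceY u hu (1,0,0) p
    have hY2 := sliceY u hu (0,1,0) p
    have hT2 := sliceY u hu (0,0,1) p
    have hX3 := sliceT u hu (1,0,0) p
    have hY3 := sliceT u hu (0,1,0) p
    have hT3 := sliceT u hu (0,0,1) p
    rw [show (fun q => pdy u q * pdt u q - (pdt u q) ^ 3)
          = (fun q => fderiv ℝ u q (0,1,0) * fderiv ℝ u q (0,0,1) - fderiv ℝ u q (0,0,1) ^ 3) by
        funext q; simp only [hXq, hYq, hTq],
      show (fun q => -(pdx u q * pdt u q) + (pdy u q) ^ 2
            - 3 * pdy u q * (pdt u q) ^ 2 + (pdt u q) ^ 4)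
          = (fun q => -(fderiv ℝ u q (1,0,0) * fderiv ℝ u q (0,0,1)) + fderiv ℝ u q (0,1,0) ^ 2 - 3 * fderiv ℝ u q (0,1,0) * fderiv ℝ u q (0,0,1) ^ 2 + fderiv ℝ u q (0,0,1) ^ 4) by
        funext q; simp only [hXq, hYq, hTq],
      show (fun q => pdx u q * pdy u q + 2 * pdt u q * (pdy u q) ^ 2
            - pdy u q * (pdt u q) ^ 3)
          = (fun q => fderiv ℝ u q (1,0,0) * fderiv ℝ u q (0,1,0) + 2 * fderiv ℝ u q (0,0,1) * fderiv ℝ u q (0,1,0) ^ 2 - fderiv ℝ u q (0,1,0) * fderiv ℝ u q (0,0,1) ^ 3) by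
        funext q; simp only [hXq, hYq, hTq]]
    rw [show pdx (fun q => fderiv ℝ u q (0,1,0) * fderiv ℝ u q (0,0,1) - fderiv ℝ u q (0,0,1) ^ 3) p
          = fderiv ℝ (fderiv ℝ u) p (1,0,0) (0,1,0) * fderiv ℝ u p (0,0,1) + fderiv ℝ u p (0,1,0) * fderiv ℝ (fderiv ℝ u) p (1,0,0) (0,0,1) - 3 * fderiv ℝ u p (0,0,1) ^ 2 * fderiv ℝ (fderiv ℝ u) p (1,0,0) (0,0,1) from
        ((hY1.mul hT1).sub (hT1.pow 3)).deriv.trans (by simp only [Prod.mk.eta]; push_cast; ring),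
      show pdy (fun q => -(fderiv ℝ u q (1,0,0) * fderiv ℝ u q (0,0,1)) + fderiv ℝ u q (0,1,0) ^ 2 - 3 * fderiv ℝ u q (0,1,0) * fderiv ℝ u q (0,0,1) ^ 2 + fderiv ℝ u q (0,0,1) ^ 4) p
          = -(fderiv ℝ (fderiv ℝ u) p (0,1,0) (1,0,0) * fderiv ℝ u p (0,0,1)) - fderiv ℝ u p (1,0,0) * fderiv ℝ (fderiv ℝ u) p (0,1,0) (0,0,1) + 2 * fderiv ℝ u p (0,1,0) * fderiv ℝ (fderiv ℝ u) p (0,1,0) (0,1,0) - 3 * fderiv ℝ u p (0,0,1) ^ 2 * fderiv ℝ (fderiv ℝ u) p (0,1,0) (0,1,0) - 6 * fderiv ℝ u p (0,1,0) * fderiv ℝ u p (0,0,1) * fderiv ℝ (fderiv ℝ u) p (0,1,0) (0,0,1) + 4 * fderiv ℝ u p (0,0,1) ^ 3 * fderiv ℝ (fderiv ℝ u) p (0,1,0) (0,0,1) from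
        ((((hX2.mul hT2).neg.add (hY2.pow 2)).sub ((hY2.const_mul 3).mul (hT2.pow 2))).add (hT2.pow 4)).deriv.trans (by simp only [Prod.mk.eta, Pi.pow_apply]; push_cast; ring),
      show pdt (fun q => fderiv ℝ u q (1,0,0) * fderiv ℝ u q (0,1,0) + 2 * fderiv ℝ u q (0,0,1) * fderiv ℝ u q (0,1,0) ^ 2 - fderiv ℝ u q (0,1,0) * fderiv ℝ u q (0,0,1) ^ 3) p
          = fderiv ℝ (fderiv ℝ u) p (0,0,1) (1,0,0) * fderiv ℝ u p (0,1,0) + fderiv ℝ u p (1,0,0) * fderiv ℝ (fderiv ℝ u) p (0,0,1) (0,1,0) + 2 * fderiv ℝ (fderiv ℝ u) p (0,0,1) (0,0,1) * fderiv ℝ u p (0,1,0) ^ 2 + 4 * fderiv ℝ u p (0,0,1) * fderiv ℝ u p (0,1,0) * fderiv ℝ (fderiv ℝ u) p (0,0,1) (0,1,0) - fderiv ℝ u p (0,0,1) ^ 3 * fderiv ℝ (fderiv ℝ u) p (0,0,1) (0,1,0) - 3 * fderiv ℝ u p (0,1,0) * fderiv ℝ u p (0,0,1) ^ 2 * fderiv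 ℝ (fderiv ℝ u) p (0,0,1) (0,0,1) from
        (((hX3.mul hY3).add ((hT3.const_mul 2).mul (hY3.pow 2))).sub (hY3.mul (hT3.pow 3))).deriv.trans (by simp only [Prod.mk.eta, Pi.pow_apply]; push_cast; ring)]
    have h := heq' p
    have s21 := hsym p (0,1,0) (1,0,0)
    have s31 := hsym p (0,0,1) (1,0,0)
    have s32 := hsym p (0,0,1) (0,1,0)
    simp only [s21, s31, s32] at h ⊢
    linear_combination (2 * fderiv ℝ u p (0,1,0) - 3 * fderiv ℝ u p (0,0,1) ^ 2) * h
  · intro p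
    have hY1 := sliceX u hu (0,1,0) p
    have hT1 := sliceX u hu (0,0,1) p
    have hX2 := sliceY u hu (1,0,0) p
    have hY2 := sliceY u hu (0,1,0) p
    have hT2 := sliceY u hu (0,0,1) p
    have hX3 := sliceT u hu (1,0,0) p
    have hY3 := sliceT u hu (0,1,0) p
    have hT3 := sliceT u hu (0,0,1) p
    rw [show (fun q => (pdy u q) ^ 2 - 2 * pdy u q * (pdt u q) ^ 2 + (pdt u q) ^ 4)
          = (fun q => fderiv ℝ u q (0,1,0) ^ 2 - 2 * fderiv ℝ u q (0,1,0) * fderiv ℝ u q (0,0,1) ^ 2 + fderiv ℝ u q (0,0,1) ^ 4) by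
        funext q; simp only [hXq, hYq, hTq],
      show (fun q => -(2 * pdx u q * pdy u q) + 2 * pdx u q * (pdt u q) ^ 2
            - 3 * (pdy u q) ^ 2 * pdt u q + 4 * pdy u q * (pdt u q) ^ 3 - (pdt u q) ^ 5)
          = (fun q => -(2 * fderiv ℝ u q (1,0,0) * fderiv ℝ u q (0,1,0)) + 2 * fderiv ℝ u q (1,0,0) * fderiv ℝ u q (0,0,1) ^ 2 - 3 * fderiv ℝ u q (0,1,0) ^ 2 * fderiv ℝ u q (0,0,1) + 4 * fderiv ℝ u q (0,1,0) * fderiv ℝ u q (0,0,1) ^ 3 - fderiv ℝ u q (0,0,1) ^ 5) by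
        funext q; simp only [hXq, hYq, hTq],
      show (fun q => -(2 * pdx u q * pdy u q * pdt u q) - (pdx u q) ^ 2
            - 3 * (pdy u q) ^ 2 * (pdt u q) ^ 2 + pdy u q * (pdt u q) ^ 4
            + (pdy u q) ^ 3)
          = (fun q => -(2 * fderiv ℝ u q (1,0,0) * fderiv ℝ u q (0,1,0) * fderiv ℝ u q (0,0,1)) - fderiv ℝ u q (1,0,0) ^ 2 - 3 * fderiv ℝ u q (0,1,0) ^ 2 * fderiv ℝ u q (0,0,1) ^ 2 + fderiv ℝ u q (0,1,0) * fderiv ℝ u q (0,0,1) ^ 4 + fderiv ℝ u q (0,1,0) ^ 3) by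
        funext q; simp only [hXq, hYq, hTq]]
    rw [show pdx (fun q => fderiv ℝ u q (0,1,0) ^ 2 - 2 * fderiv ℝ u q (0,1,0) * fderiv ℝ u q (0,0,1) ^ 2 + fderiv ℝ u q (0,0,1) ^ 4) p
          = 2 * fderiv ℝ u p (0,1,0) * fderiv ℝ (fderiv ℝ u) p (1,0,0) (0,1,0) - 2 * fderiv ℝ u p (0,0,1) ^ 2 * fderiv ℝ (fderiv ℝ u) p (1,0,0) (0,1,0) - 4 * fderiv ℝ u p (0,1,0) * fderiv ℝ u p (0,0,1) * fderiv ℝ (fderiv ℝ u) p (1,0,0) (0,0,1) + 4 * fderiv ℝ u p (0,0,1) ^ 3 * fderiv ℝ (fderiv ℝ u) p (1,0,0) (0,0,1) from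
        (((hY1.pow 2).sub ((hY1.const_mul 2).mul (hT1.pow 2))).add (hT1.pow 4)).deriv.trans (by simp only [Prod.mk.eta, Pi.pow_apply]; push_cast; ring),
      show pdy (fun q => -(2 * fderiv ℝ u q (1,0,0) * fderiv ℝ u q (0,1,0)) + 2 * fderiv ℝ u q (1,0,0) * fderiv ℝ u q (0,0,1) ^ 2 - 3 * fderiv ℝ u q (0,1,0) ^ 2 * fderiv ℝ u q (0,0,1) + 4 * fderiv ℝ u q (0,1,0) * fderiv ℝ u q (0,0,1) ^ 3 - fderiv ℝ u q (0,0,1) ^ 5) p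
          = -(2 * fderiv ℝ (fderiv ℝ u) p (0,1,0) (1,0,0) * fderiv ℝ u p (0,1,0)) - 2 * fderiv ℝ u p (1,0,0) * fderiv ℝ (fderiv ℝ u) p (0,1,0) (0,1,0) + 2 * fderiv ℝ u p (0,0,1) ^ 2 * fderiv ℝ (fderiv ℝ u) p (0,1,0) (1,0,0) + 4 * fderiv ℝ u p (1,0,0) * fderiv ℝ u p (0,0,1) * fderiv ℝ (fderiv ℝ u) p (0,1,0) (0,0,1) - 6 * fderiv ℝ u p (0,1,0) * fderiv ℝ u p (0,0,1) * fderiv ℝ (fderiv ℝ u) p (0,1,0) (0,1,0) - 3 * fderiv ℝ u p (0,1,0) ^ 2 * fderiv ℝ (fderiv ℝ u) p (0,1,0) (0,0,1) + 4 * fderiv ℝ u p (0,0,1) ^ 3 * fderiv ℝ (fderiv ℝ u) p (0,1,0) (0,1,0) + 12 * fderiv ℝ u p (0,1,0) * fderiv ℝ u p (0,0,1) ^ 2 * fderiv ℝ (fderiv ℝ u) p (0,1,0) (0,0,1) - 5 * fderiv ℝ u p (0,0,1) ^ 4 * fderiv ℝ (fderiv ℝ u) p (0,1,0) (0,0,1)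 from
        ((((((hX2.const_mul 2).mul hY2).neg.add ((hX2.const_mul 2).mul (hT2.pow 2))).sub (((hY2.pow 2).const_mul 3).mul hT2)).add ((hY2.const_mul 4).mul (hT2.pow 3))).sub (hT2.pow 5)).deriv.trans (by simp only [Prod.mk.eta, Pi.pow_apply]; push_cast; ring),
      show pdt (fun q => -(2 * fderiv ℝ u q (1,0,0) * fderiv ℝ u q (0,1,0) * fderiv ℝ u q (0,0,1)) - fderiv ℝ u q (1,0,0) ^ 2 - 3 * fderiv ℝ u q (0,1,0) ^ 2 * fderiv ℝ u q (0,0,1) ^ 2 + fderiv ℝ u q (0,1,0) * fderiv ℝ u q (0,0,1) ^ 4 + fderiv ℝ u q (0,1,0) ^ 3) p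
          = -(2 * fderiv ℝ (fderiv ℝ u) p (0,0,1) (1,0,0) * fderiv ℝ u p (0,1,0) * fderiv ℝ u p (0,0,1)) - 2 * fderiv ℝ u p (1,0,0) * fderiv ℝ u p (0,0,1) * fderiv ℝ (fderiv ℝ u) p (0,0,1) (0,1,0) - 2 * fderiv ℝ u p (1,0,0) * fderiv ℝ u p (0,1,0) * fderiv ℝ (fderiv ℝ u) p (0,0,1) (0,0,1) - 2 * fderiv ℝ u p (1,0,0) * fderiv ℝ (fderiv ℝ u) p (0,0,1) (1,0,0) - 6 * fderiv ℝ u p (0,1,0) * fderiv ℝ u p (0,0,1) ^ 2 * fderiv ℝ (fderiv ℝ u) p (0,0,1) (0,1,0) - 6 * fderiv ℝ u p (0,1,0) ^ 2 * fderiv ℝ u p (0,0,1) * fderiv ℝ (fderiv ℝ u) p (0,0,1) (0,0,1) + fderiv ℝ u p (0,0,1) ^ 4 * fderiv ℝ (fderiv ℝ u) p (0,0,1) (0,1,0) + 4 * fderiv ℝ u p (0,1,0) * fderiv ℝ u p (0,0,1) ^ 3 * fderiv ℝ (fderiv ℝ u) p (0,0,1) (0,0,1) + 3 * fderiv ℝ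 u p (0,1,0) ^ 2 * fderiv ℝ (fderiv ℝ u) p (0,0,1) (0,1,0) from
        (((((((hX3.const_mul 2).mul hY3).mul hT3).neg.sub (hX3.pow 2)).sub (((hY3.pow 2).const_mul 3).mul (hT3.pow 2))).add (hY3.mul (hT3.pow 4))).add (hY3.pow 3)).deriv.trans (by simp only [Prod.mk.eta, Pi.pow_apply, Pi.mul_apply]; push_cast; ring)]
    have h := heq' p
    have s21 := hsym p (0,1,0) (1,0,0)
    have s31 := hsym p (0,0,1) (1,0,0)
    have s32 := hsym p (0,0,1) (0,1,0)
    simp only [s21, s31, s32] at h ⊢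
    linear_combination (-2 * fderiv ℝ u p (1,0,0) - 6 * fderiv ℝ u p (0,1,0) * fderiv ℝ u p (0,0,1) + 4 * fderiv ℝ u p (0,0,1) ^ 3) * h
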